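/- Let F_q be a finite field with q elements and let r, n be nonnegative integers with r ≥ 1. The number of r-dimensional F_q-subspaces of an (n+r)-dimensional F_q-vector space equals the Gaussian binomial coefficient ∏_{j=1}^{r} (q^{n+j} − 1)/(q^{j} − 1). -/

import Mathlib

open Submodule Module

section aux
variable {F : Type*} [Field F] [Fintype F]
    {V : Type*} [AddCommGroup V] [Module F V] [FiniteDimensional F V]

/-- The fiber of "span" over a subspace `W` is equivalent to the set of
linearly independent `r`-tuples in `W`. -/
noncomputable def grassFiberEquiv (r : ℕ) (W : Submodule F V) (hW : Module.finrank F W = r) :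
    {s : {t : Fin r → V // LinearIndependent F t} //
        Submodule.span F (Set.range s.1) = W} ≃
      {s : Fin r → W // LinearIndependent F s} where
  toFun s := ⟨fun i => ⟨s.1.1 i, by
      have := s.2 ▸ Submodule.subset_span (Set.mem_range_self i)
      exact this⟩, by
    have h := s.1.2
    exact h.of_comp W.subtype⟩
  invFun s := ⟨⟨fun i => (s.1 i : V), s.2.map' W.subtype (Submodule.ker_subtype W)⟩, by
    have hspan : Submodule.span F (Set.range s.1) = ⊤ :=
      s.2.span_eq_top_of_card_eq_finrank' (by simpa using hW.symm)
    have : Set.range (fun i => (s.1 i : V)) = W.subtype '' (Set.range s.1) := by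
      ext x; simp [Set.range_comp]
    rw [this, ← Submodule.map_span, hspan, Submodule.map_top, Submodule.range_subtype]⟩
  left_inv s := Subtype.ext (Subtype.ext rfl)
  right_inv s := Subtype.ext (funext fun i => rfl)

attribute [local instance] Fintype.ofFinite in
theorem grass_count (r n : ℕ) (hdim : Module.finrank F V = n + r) :
    (∏ i : Fin r, (Fintype.card F ^ (n + r) - Fintype.card F ^ i.val)) =
      Nat.card {W : Submodule F V // Module.finrank F W = r} *
        ∏ i : Fin r, (Fintype.card F ^ r - Fintype.card F ^ i.val) := by
  classical
  have hfinV : Finite V := Module.finite_of_finite F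
  rw [← hdim, ← card_linearIndependent (K := F) (V := V) (k := r) (by omega)]
  -- decompose by span
  let f : {s : Fin r → V // LinearIndependent F s} →
      {W : Submodule F V // Module.finrank F W = r} :=
    fun s => ⟨Submodule.span F (Set.range s.1), by
      rw [finrank_span_eq_card s.2, Fintype.card_fin]⟩
  have e : {s : Fin r → V // LinearIndependent F s} ≃
      Σ W : {W : Submodule F V // Module.finrank F W = r},
        {s : {t : Fin r → V // LinearIndependent F t} // f s = W} :=
    (Equiv.sigmaFiberEquiv f).symm
  rw [Nat.card_congr e]
  simp only [Nat.card_eq_fintype_card, Fintype.card_sigma]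
  have hfib : ∀ W : {W : Submodule F V // Module.finrank F W = r},
      Fintype.card {s : {t : Fin r → V // LinearIndependent F t} // f s = W} =
        ∏ i : Fin r, (Fintype.card F ^ r - Fintype.card F ^ i.val) := by
    intro W
    have e2 : {s : {t : Fin r → V // LinearIndependent F t} // f s = W} ≃
        {s : Fin r → W.1 // LinearIndependent F s} :=
      (Equiv.subtypeEquivRight (fun s => by
        constructor
        · intro h; exact congrArg Subtype.val h
        · intro h; exact Subtype.ext h)).trans (grassFiberEquiv r W.1 W.2)
    rw [Fintype.card_congr e2, ← Nat.card_eq_fintype_card,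
      card_linearIndependent (K := F) (V := W.1) (k := r) (le_of_eq W.2.symm), W.2]
  rw [Finset.sum_congr rfl (fun W _ => hfib W), Finset.sum_const, Finset.card_univ,
    smul_eq_mul]

end aux

/-- The number of `r`-dimensional `𝔽_q`-subspaces of an `(n+r)`-dimensional
`𝔽_q`-vector space equals the Gaussian binomial coefficient
`∏_{j=1}^{r} (q^{n+j} − 1)/(q^{j} − 1)`. -/
theorem card_grassmannian
    {F : Type*} [Field F] [Fintype F]
    {V : Type*} [AddCommGroup V] [Module F V] [FiniteDimensional F V]
    (r n : ℕ) (hr : 1 ≤ r) (hdim : Module.finrank F V = n + r) :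
    (Nat.card {W : Submodule F V // Module.finrank F W = r} : ℚ) =
      ∏ j ∈ Finset.Icc 1 r,
        ((Fintype.card F : ℚ) ^ (n + j) - 1) / ((Fintype.card F : ℚ) ^ j - 1) := by
  classical
  set q := Fintype.card F with hqdef
  have hq : 1 < q := Fintype.one_lt_card
  have hq1 : (1:ℚ) < (q:ℚ) := by exact_mod_cast hq
  have hq0 : (0:ℚ) < (q:ℚ) := by linarith
  have key := grass_count (F := F) (V := V) r n hdim
  have cast_prod : ∀ m : ℕ, r ≤ m →
      ((∏ i : Fin r, (q ^ m - q ^ i.val) : ℕ) : ℚ) =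
        ∏ i : Fin r, ((q:ℚ) ^ m - (q:ℚ) ^ i.val) := by
    intro m hm
    rw [Nat.cast_prod]
    refine Finset.prod_congr rfl fun i _ => ?_
    rw [Nat.cast_sub (Nat.pow_le_pow_right hq.le (le_trans i.isLt.le hm))]
    push_cast; ring
  have hBpos : (0:ℚ) < ∏ i : Fin r, ((q:ℚ) ^ r - (q:ℚ) ^ i.val) := by
    refine Finset.prod_pos fun i _ => ?_
    have : (q:ℚ) ^ i.val < (q:ℚ) ^ r := pow_lt_pow_right₀ hq1 i.isLt
    linarith
  have keyQ : (∏ i : Fin r, ((q:ℚ) ^ (n + r) - (q:ℚ) ^ i.val)) =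
      (Nat.card {W : Submodule F V // Module.finrank F W = r} : ℚ) *
        ∏ i : Fin r, ((q:ℚ) ^ r - (q:ℚ) ^ i.val) := by
    rw [← cast_prod (n + r) (by omega), ← cast_prod r le_rfl]
    exact_mod_cast congrArg (Nat.cast : ℕ → ℚ) key
  have hN : (Nat.card {W : Submodule F V // Module.finrank F W = r} : ℚ) =
      ∏ i : Fin r, ((q:ℚ) ^ (n + r) - (q:ℚ) ^ i.val) / ((q:ℚ) ^ r - (q:ℚ) ^ i.val) := by
    rw [Finset.prod_div_distrib, eq_div_iff hBpos.ne', ← keyQ]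
  rw [hN, Fin.prod_univ_eq_prod_range
    (fun i => ((q:ℚ) ^ (n + r) - (q:ℚ) ^ i) / ((q:ℚ) ^ r - (q:ℚ) ^ i))]
  refine Finset.prod_nbij' (fun i => r - i) (fun j => r - j) ?_ ?_ ?_ ?_ ?_
  · intro a ha; simp only [Finset.mem_range] at ha; simp only [Finset.mem_Icc]; omega
  · intro a ha; simp only [Finset.mem_Icc] at ha; simp only [Finset.mem_range]; omega
  · intro a ha; simp only [Finset.mem_range] at ha; show r - (r - a) = a; omega
  · intro a ha; simp only [Finset.mem_Icc] at ha; show r - (r - a) = a; omega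
  · intro i hi
    simp only [Finset.mem_range] at hi
    have e1 : (q:ℚ) ^ (n + r) = (q:ℚ) ^ i * (q:ℚ) ^ (n + (r - i)) := by
      rw [← pow_add]; congr 1; omega
    have e2 : (q:ℚ) ^ r = (q:ℚ) ^ i * (q:ℚ) ^ (r - i) := by
      rw [← pow_add]; congr 1; omega
    rw [e1, e2,
      show (q:ℚ) ^ i * (q:ℚ) ^ (n + (r - i)) - (q:ℚ) ^ i = (q:ℚ) ^ i * ((q:ℚ) ^ (n + (r - i)) - 1) by ring,
      show (q:ℚ) ^ i * (q:ℚ) ^ (r - i) - (q:ℚ) ^ i = (q:ℚ) ^ i * ((q:ℚ) ^ (r - i) - 1) by ring,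
      mul_div_mul_left _ _ (pow_ne_zero _ hq0.ne')]
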